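/- arXiv:1410.1249 — 3 statements merged into one kernel-verified Lean document; each statement's English description precedes it below -/
import Mathlib

section
/- Let C be the formal power series over ℚ with C = ∑_{n≥0} C_n z^n where C_n is the n-th Catalan number. For every integer s ≥ 1 and every n ≥ 0, the coefficient of z^n in C^s equals (s/(2n+s))·binom(2n+s, n). -/
open PowerSeries Finset

/-- The Catalan generating function `C = ∑ Cₙ zⁿ` over `ℚ`. -/
noncomputable def Cgf : PowerSeries ℚ := PowerSeries.mk fun n => (catalan n : ℚ)

lemma cgf_eq : Cgf = 1 + X * Cgf ^ 2 := by
  ext n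
  cases n with
  | zero => simp [Cgf]
  | succ n =>
    rw [map_add, coeff_succ_X_mul, sq, coeff_mul]
    simp only [Cgf, coeff_mk, coeff_one, Nat.succ_ne_zero, if_false, zero_add, catalan_succ']
    push_cast
    rfl

lemma cgf_rec (s n : ℕ) :
    coeff (R := ℚ) (n + 1) (Cgf ^ (s + 1)) =
      coeff (R := ℚ) (n + 1) (Cgf ^ s) + coeff (R := ℚ) n (Cgf ^ (s + 2)) := by
  have h : Cgf ^ (s + 1) = Cgf ^ s + X * Cgf ^ (s + 2) := by
    calc Cgf ^ (s + 1) = Cgf ^ s * Cgf := by ring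
    _ = Cgf ^ s * (1 + X * Cgf ^ 2) := by rw [← cgf_eq]
    _ = Cgf ^ s + X * Cgf ^ (s + 2) := by ring
  rw [h, map_add, coeff_succ_X_mul]

lemma catalan_rat (n : ℕ) :
    (catalan n : ℚ) = ((2 * n + 1).choose n : ℚ) / (2 * n + 1) := by
  have h1 : (n + 1) * catalan n = (2 * n).choose n := by
    rw [succ_mul_catalan_eq_centralBinom]; rfl
  have h2 : (2 * n + 1) * (2 * n).choose n = (2 * n + 1).choose (n + 1) * (n + 1) :=
    Nat.add_one_mul_choose_eq (2 * n) n
  have h3 : (2 * n + 1).choose (n + 1) = (2 * n + 1).choose n := by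
    rw [← Nat.choose_symm (by omega)]
    congr 1; omega
  have h1' : ((n : ℚ) + 1) * catalan n = ((2 * n).choose n : ℚ) := by exact_mod_cast h1
  have h2' : (2 * (n : ℚ) + 1) * ((2 * n).choose n : ℚ)
      = ((2 * n + 1).choose n : ℚ) * (n + 1) := by
    rw [← h3]; exact_mod_cast h2
  have hne : (2 * (n : ℚ) + 1) ≠ 0 := by positivity
  have hne2 : (n : ℚ) + 1 ≠ 0 := by positivity
  field_simp
  nlinarith [h1', h2']

lemma aux : ∀ s : ℕ, ∀ n : ℕ,
    coeff (R := ℚ) n (Cgf ^ (s + 1)) =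
      ((s : ℚ) + 1) / (2 * n + s + 1) * ((2 * n + s + 1).choose n : ℚ) := by
  intro s
  induction s using Nat.twoStepInduction with
  | zero =>
    intro n
    rw [pow_one]
    simp only [Cgf, coeff_mk, Nat.cast_zero, add_zero, Nat.add_zero]
    rw [catalan_rat]
    norm_num
    ring
  | one =>
    intro n
    have h : coeff (R := ℚ) n (Cgf ^ 2) = (catalan (n + 1) : ℚ) := by
      have h0 := congrArg (coeff (R := ℚ) (n + 1)) cgf_eq
      rw [map_add, coeff_succ_X_mul] at h0
      simp only [Cgf, coeff_mk, coeff_one, Nat.succ_ne_zero, if_false, zero_add] at h0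
      rw [show Cgf ^ 2 = (PowerSeries.mk fun n => (catalan n : ℚ)) ^ 2 from rfl, ← h0]
    rw [h, catalan_rat]
    -- need: choose(2(n+1)+1, n+1)/(2(n+1)+1) = 2/(2n+2) * choose(2n+2, n)
    have h2 : (2 * n + 3) * (2 * n + 2).choose n = (2 * n + 3).choose (n + 1) * (n + 1) :=
      Nat.add_one_mul_choose_eq (2 * n + 2) n
    have h2' : (2 * (n : ℚ) + 3) * ((2 * n + 2).choose n : ℚ)
        = ((2 * n + 3).choose (n + 1) : ℚ) * (n + 1) := by exact_mod_cast h2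
    have c1 : (2 * (n + 1) + 1) = 2 * n + 3 := by omega
    have c2 : (2 * n + 1 + 1) = 2 * n + 2 := by omega
    rw [c1, c2]
    push_cast
    have hne : (2 * (n : ℚ) + 3) ≠ 0 := by positivity
    have hne2 : (2 * (n : ℚ) + 2) ≠ 0 := by positivity
    field_simp
    nlinarith [h2']
  | more s ih ih1 =>
    intro n
    have hrec := cgf_rec (s + 1) n
    have e1 := ih1 (n + 1)
    have e2 := ih (n + 1)
    have goal2 : coeff (R := ℚ) n (Cgf ^ (s + 1 + 2)) =
        coeff (R := ℚ) (n + 1) (Cgf ^ (s + 1 + 1)) - coeff (R := ℚ) (n + 1) (Cgf ^ (s + 1)) := by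
      rw [hrec]; ring
    rw [show (s + 2 + 1 : ℕ) = s + 1 + 2 from rfl, goal2, e1, e2]
    set M : ℕ := 2 * n + s + 3 with hM
    have c1 : (2 * (n + 1) + (s + 1) + 1) = M + 1 := by omega
    have c2 : (2 * (n + 1) + s + 1) = M := by omega
    have c3 : (2 * n + (s + 2) + 1) = M := by omega
    rw [c1, c2, c3]
    have hPascal : ((M + 1).choose (n + 1) : ℚ) = M.choose n + M.choose (n + 1) := by
      exact_mod_cast Nat.choose_succ_succ M n
    have hkey : (M.choose (n + 1)) * (n + 1) = M.choose n * (M - n) :=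
      (Nat.choose_succ_right_eq M n)
    have hMn : (M - n : ℕ) = n + s + 3 := by omega
    rw [hMn] at hkey
    have hkey' : ((M.choose (n + 1) : ℚ)) * ((n : ℚ) + 1)
        = (M.choose n : ℚ) * ((n : ℚ) + s + 3) := by exact_mod_cast hkey
    have hb : (M.choose (n + 1) : ℚ)
        = (M.choose n : ℚ) * ((n : ℚ) + (s : ℚ) + 3) / ((n : ℚ) + 1) := by
      have hne : (n : ℚ) + 1 ≠ 0 := by positivity
      field_simp
      linarith [hkey']
    rw [hPascal, hb]
    push_cast
    have d1 : 2 * ((n : ℚ) + 1) + (s + 1) + 1 ≠ 0 := by positivity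
    have d2 : 2 * ((n : ℚ) + 1) + s + 1 ≠ 0 := by positivity
    have d3 : (n : ℚ) + 1 ≠ 0 := by positivity
    have d4 : 2 * (n : ℚ) + ((s : ℚ) + 2) + 1 ≠ 0 := by positivity
    field_simp
    ring

/-- `[zⁿ] Cˢ = (s/(2n+s))·binom(2n+s, n)` for `s ≥ 1`. -/
theorem stmt3 (s : ℕ) (hs : 1 ≤ s) (n : ℕ) :
    PowerSeries.coeff (R := ℚ) n (Cgf ^ s) =
      (s : ℚ) / (2 * n + s) * ((2 * n + s).choose n : ℚ) := by
  obtain ⟨t, rfl⟩ := Nat.exists_eq_add_of_le hs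
  have h := aux t n
  rw [show (1 + t : ℕ) = t + 1 from by omega]
  rw [h]
  rw [show (2 * n + (t + 1) : ℕ) = 2 * n + t + 1 from by omega]
  push_cast
  ring
end

section
/- Let B and C be the central binomial and Catalan generating functions over ℚ. For every n ≥ 1, the coefficient of z^n in (B−1)/2 + zB³ equals (n+1)·binom(2n−1, n) = ((n+1)/2)·binom(2n,n); that is, the total number of vertices over all right branch new type trees with n edges is (n+1)·binom(2n−1,n). -/
open PowerSeries Finset

/-- The central binomial generating function `B = ∑ binom(2n,n) zⁿ` over `ℚ`. -/
noncomputable def Bgf : PowerSeries ℚ := PowerSeries.mk fun n => ((2 * n).choose n : ℚ)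

lemma coeff_Bgf (n : ℕ) : PowerSeries.coeff n Bgf = (n.centralBinom : ℚ) := by
  simp [Bgf, Nat.centralBinom]

lemma cb_rec (n : ℕ) : ((n:ℚ)+1) * ((n+1).centralBinom : ℚ) = 2 * (2*n+1) * (n.centralBinom : ℚ) := by
  exact_mod_cast congrArg (Nat.cast : ℕ → ℚ) (Nat.succ_mul_centralBinom_succ n)

-- (1 - 4X) * B = 1 - 2 X C
lemma L1 : (1 - 4 * PowerSeries.X) * Bgf = 1 - 2 * PowerSeries.X * Cgf := by
  ext n
  rcases n with _ | m
  · simp [Bgf, Cgf, sub_mul, mul_comm, PowerSeries.coeff_zero_eq_constantCoeff]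
  · have h1 : PowerSeries.coeff (m+1) ((1 - 4 * PowerSeries.X) * Bgf)
        = ((m+1).centralBinom : ℚ) - 4 * (m.centralBinom : ℚ) := by
      rw [sub_mul, one_mul, map_sub, coeff_Bgf,
        show ((4:ℚ⟦X⟧) = PowerSeries.C 4) from (map_ofNat _ 4).symm, mul_assoc,
        PowerSeries.coeff_C_mul, PowerSeries.coeff_succ_X_mul, coeff_Bgf]
    have h2 : PowerSeries.coeff (m+1) (1 - 2 * PowerSeries.X * Cgf)
        = -2 * (catalan m : ℚ) := by
      rw [map_sub, show ((2:ℚ⟦X⟧) = PowerSeries.C 2) from (map_ofNat _ 2).symm, mul_assoc,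
        PowerSeries.coeff_C_mul, PowerSeries.coeff_succ_X_mul]
      simp [Cgf]
    rw [h1, h2]
    -- (m+1) * cb(m+1) = 2(2m+1) cb m, (m+1) * catalan m = cb m
    have hc : ((m:ℚ)+1) * (catalan m : ℚ) = (m.centralBinom : ℚ) := by
      exact_mod_cast congrArg (Nat.cast : ℕ → ℚ) (succ_mul_catalan_eq_centralBinom m)
    have := cb_rec m
    have hm : ((m:ℚ)+1) ≠ 0 := by positivity
    field_simp at *
    nlinarith [this, hc]

-- X * C^2 = C - 1
lemma L2 : PowerSeries.X * Cgf ^ 2 = Cgf - 1 := by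
  ext n
  rcases n with _ | m
  · simp [Cgf, PowerSeries.coeff_zero_eq_constantCoeff]
  · rw [PowerSeries.coeff_succ_X_mul, sq, PowerSeries.coeff_mul, map_sub]
    have : ∀ p ∈ antidiagonal m, PowerSeries.coeff p.1 Cgf * PowerSeries.coeff p.2 Cgf
        = ((catalan p.1 * catalan p.2 : ℕ) : ℚ) := by
      intro p _; simp [Cgf]
    rw [Finset.sum_congr rfl this, ← Nat.cast_sum, ← catalan_succ']
    simp [Cgf]

lemma hC0 : PowerSeries.constantCoeff (1 - 4 * PowerSeries.X : ℚ⟦X⟧) = 1 := by simp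

lemma hne : (1 - 4 * PowerSeries.X : ℚ⟦X⟧) ≠ 0 := by
  intro h; have := congrArg (PowerSeries.constantCoeff) h
  rw [hC0] at this; simp at this

-- (1-4X) * B^2 = 1
lemma L3 : (1 - 4 * PowerSeries.X) * Bgf ^ 2 = 1 := by
  have key : (1 - 4 * PowerSeries.X) * ((1 - 4 * PowerSeries.X) * Bgf ^ 2) =
      (1 - 4 * PowerSeries.X) * 1 := by
    have : ((1 - 4 * PowerSeries.X) * Bgf) ^ 2 = (1 - 2 * PowerSeries.X * Cgf) ^ 2 := by
      rw [L1]
    have expand : (1 - 2 * PowerSeries.X * Cgf) ^ 2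
        = 1 - 4 * PowerSeries.X * Cgf + 4 * (PowerSeries.X * (PowerSeries.X * Cgf ^ 2)) := by
      ring
    rw [L2] at expand
    calc (1 - 4 * PowerSeries.X) * ((1 - 4 * PowerSeries.X) * Bgf ^ 2)
        = ((1 - 4 * PowerSeries.X) * Bgf) ^ 2 := by ring
      _ = 1 - 4 * PowerSeries.X * Cgf + 4 * (PowerSeries.X * (Cgf - 1)) := by rw [this, expand]
      _ = (1 - 4 * PowerSeries.X) * 1 := by ring
  exact mul_left_cancel₀ hne key

-- (1-4X) * B^3 = B
lemma L4 : (1 - 4 * PowerSeries.X) * Bgf ^ 3 = Bgf := by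
  have : (1 - 4 * PowerSeries.X) * Bgf ^ 3 = ((1 - 4 * PowerSeries.X) * Bgf ^ 2) * Bgf := by ring
  rw [this, L3, one_mul]

lemma coeff_B3 (n : ℕ) : PowerSeries.coeff n (Bgf ^ 3) = (2*(n:ℚ)+1) * (n.centralBinom : ℚ) := by
  induction n with
  | zero =>
    rw [PowerSeries.coeff_zero_eq_constantCoeff, map_pow]
    simp [Bgf, Nat.centralBinom]
  | succ m ih =>
    have h := congrArg (PowerSeries.coeff (m+1)) L4
    rw [sub_mul, one_mul, map_sub,
      show ((4:ℚ⟦X⟧) = PowerSeries.C 4) from (map_ofNat _ 4).symm, mul_assoc,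
      PowerSeries.coeff_C_mul, PowerSeries.coeff_succ_X_mul, ih, coeff_Bgf] at h
    have h' : PowerSeries.coeff (m+1) (Bgf ^ 3)
        = ((m+1).centralBinom : ℚ) + 4 * ((2*(m:ℚ)+1) * (m.centralBinom : ℚ)) := by
      linarith [h]
    rw [h']
    have := cb_rec m
    have hm : ((m:ℚ)+1) ≠ 0 := by positivity
    have key : ((m:ℚ)+1) * ((2*((m:ℚ)+1)+1) * ((m+1).centralBinom : ℚ))
        = ((m:ℚ)+1) * (((m+1).centralBinom : ℚ) + 4 * ((2*(m:ℚ)+1) * (m.centralBinom : ℚ))) := by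
      nlinarith [this]
    have := mul_left_cancel₀ hm key
    push_cast
    linarith [this]

lemma two_inv : ((2 : PowerSeries ℚ))⁻¹ = PowerSeries.C (1/2) := by
  rw [show ((2:ℚ⟦X⟧) = PowerSeries.C 2) from (map_ofNat _ 2).symm, PowerSeries.C_inv]
  norm_num


/-- For `n ≥ 1`, the total number of vertices over all right branch new type trees with
`n` edges is `[zⁿ]((B−1)/2 + zB³) = (n+1)·binom(2n−1,n) = ((n+1)/2)·binom(2n,n)`. -/
theorem stmt14 (n : ℕ) (hn : 1 ≤ n) :
    PowerSeries.coeff n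
        ((2 : PowerSeries ℚ)⁻¹ * (Bgf - 1) + PowerSeries.X * Bgf ^ 3) =
      ((n + 1 : ℕ) : ℚ) * ((2 * n - 1).choose n : ℚ) ∧
    ((n + 1 : ℕ) : ℚ) * ((2 * n - 1).choose n : ℚ) =
      ((n : ℚ) + 1) / 2 * ((2 * n).choose n : ℚ) := by
  obtain _ | m := n
  · omega
  -- choose identity: 2 * (2(m+1)-1).choose (m+1) = (2(m+1)).choose (m+1)
  have hch : 2 * ((2 * (m+1) - 1).choose (m+1)) = (2*(m+1)).choose (m+1) := by
    have h1 : 2 * (m+1) - 1 = 2*m+1 := by omega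
    rw [h1]
    have pascal : (2*m+2).choose (m+1) = (2*m+1).choose m + (2*m+1).choose (m+1) := by
      rw [show 2*m+2 = (2*m+1)+1 by ring, Nat.choose_succ_succ]
    have symm : (2*m+1).choose m = (2*m+1).choose (m+1) := by
      rw [← Nat.choose_symm (by omega : m ≤ 2*m+1)]
      congr 1; omega
    have : 2*(m+1) = 2*m+2 := by ring
    rw [this, pascal, symm]; ring
  constructor
  · rw [map_add, two_inv, PowerSeries.coeff_C_mul, map_sub, PowerSeries.coeff_succ_X_mul,
      coeff_Bgf, coeff_B3]
    have hone : PowerSeries.coeff (m+1) (1 : ℚ⟦X⟧) = 0 := by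
      simp [PowerSeries.coeff_one]
    rw [hone]
    have hcb : ((m+1).centralBinom : ℚ) = ((2*(m+1)).choose (m+1) : ℚ) := by
      simp [Nat.centralBinom]
    have hc2 : (((2 * (m+1) - 1).choose (m+1) : ℕ) : ℚ) * 2 = ((2*(m+1)).choose (m+1) : ℚ) := by
      exact_mod_cast congrArg (Nat.cast : ℕ → ℚ) (by linarith [hch] : ((2 * (m+1) - 1).choose (m+1)) * 2 = (2*(m+1)).choose (m+1))
    have := cb_rec m
    rw [hcb] at this ⊢
    push_cast at *
    nlinarith [this, hc2]
  · have hc2 : (((2 * (m+1) - 1).choose (m+1) : ℕ) : ℚ) * 2 = ((2*(m+1)).choose (m+1) : ℚ) := by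
      exact_mod_cast congrArg (Nat.cast : ℕ → ℚ) (by linarith [hch] : ((2 * (m+1) - 1).choose (m+1)) * 2 = (2*(m+1)).choose (m+1))
    push_cast at *
    nlinarith [hc2]
end

section
/- Let B and C be the central binomial and Catalan generating functions over ℚ. For every n ≥ 0, the coefficient of z^n in B·C·(B + 4z·(1−4z)⁻¹) equals (2n+1)²·C_n, where C_n is the n-th Catalan number; that is, the total number of vertices over all complete binary trees with n internal vertices, each carrying a distinguished mutator vertex, is (2n+1)²·C_n. -/
open PowerSeries Finset

/-- The Catalan generating function satisfies `C = 1 + X·C²`. -/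
lemma Cgf_eq : Cgf = 1 + X * (Cgf * Cgf) := by
  ext n
  cases n with
  | zero => simp [Cgf, coeff_zero_eq_constantCoeff]
  | succ n =>
      rw [map_add, coeff_succ_X_mul, coeff_mul]
      simp only [Cgf, coeff_mk, coeff_one, Nat.succ_ne_zero, if_false, zero_add]
      rw [catalan_succ']
      push_cast
      rfl

/-- `B = C + X·C'`, i.e. `binom(2n,n) = (n+1)·catalan n`. -/
lemma Bgf_eq : Bgf = Cgf + X * ((d⁄dX ℚ) Cgf) := by
  ext n
  cases n with
  | zero => simp [Bgf, Cgf, coeff_zero_eq_constantCoeff]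
  | succ n =>
      rw [map_add, coeff_succ_X_mul, coeff_derivative]
      simp only [Bgf, Cgf, coeff_mk]
      have h2 : (2 * (n + 1)).choose (n + 1) = (n + 1 + 1) * catalan (n + 1) := by
        rw [succ_mul_catalan_eq_centralBinom]; rfl
      rw [h2]; push_cast; ring

/-- `(1 − 2XC)·C' = C²`. -/
lemma deriv_Cgf : (1 - 2 * X * Cgf) * (d⁄dX ℚ) Cgf = Cgf * Cgf := by
  have h := congrArg (⇑(d⁄dX ℚ)) Cgf_eq
  simp only [map_add, Derivation.map_one_eq_zero, Derivation.leibniz, derivative_X,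
    smul_eq_mul, mul_one] at h
  linear_combination h

/-- `(1 − 2XC)·C'' = 4C·C' + 2X·C'²`. -/
lemma deriv2_Cgf : (1 - 2 * X * Cgf) * (d⁄dX ℚ) ((d⁄dX ℚ) Cgf) =
    4 * Cgf * (d⁄dX ℚ) Cgf + 2 * X * ((d⁄dX ℚ) Cgf) ^ 2 := by
  have hD' : (d⁄dX ℚ) Cgf = Cgf * Cgf + (X * Cgf * (d⁄dX ℚ) Cgf + X * Cgf * (d⁄dX ℚ) Cgf) := by
    linear_combination deriv_Cgf
  have h := congrArg (⇑(d⁄dX ℚ)) hD'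
  simp only [map_add, Derivation.map_one_eq_zero, Derivation.leibniz, derivative_X,
    smul_eq_mul, mul_one] at h
  linear_combination h

/-- `(1 − 2XC)·B = 1`. -/
lemma unit_Bgf : (1 - 2 * X * Cgf) * Bgf = 1 := by
  linear_combination (1 - 2 * X * Cgf) * Bgf_eq + X * deriv_Cgf + Cgf_eq

/-- `(1 − 4X)⁻¹ = B²`. -/
lemma inv_eq_Bgf_sq : (1 - 4 * X : PowerSeries ℚ)⁻¹ = Bgf ^ 2 := by
  rw [PowerSeries.inv_eq_iff_mul_eq_one (by simp)]
  linear_combination ((1 - 2 * X * Cgf) * Bgf + 1) * unit_Bgf + 4 * X * Bgf ^ 2 * Cgf_eq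

/-- The main power series identity `B·C·(B + 4X·B²) = C + 8X·C' + 4X²·C''`. -/
lemma main_identity :
    Bgf * Cgf * (Bgf + 4 * X * Bgf ^ 2) =
      Cgf + C (8 : ℚ) * (X * (d⁄dX ℚ) Cgf) + C (4 : ℚ) * (X * (X * (d⁄dX ℚ) ((d⁄dX ℚ) Cgf))) := by
  set u : PowerSeries ℚ := 1 - 2 * X * Cgf with hu
  set dC : PowerSeries ℚ := (d⁄dX ℚ) Cgf with hdC
  set ddC : PowerSeries ℚ := (d⁄dX ℚ) ((d⁄dX ℚ) Cgf) with hddC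
  have hc8 : (C (8 : ℚ)) = (8 : PowerSeries ℚ) := map_ofNat _ _
  have hc4 : (C (4 : ℚ)) = (4 : PowerSeries ℚ) := map_ofNat _ _
  rw [hc8, hc4]
  have key1 : u ^ 3 * (Bgf * Cgf * (Bgf + 4 * X * Bgf ^ 2)) = Cgf * (u + 4 * X) := by
    linear_combination
      (u * Cgf * (u * Bgf + 1) + 4 * X * Cgf * ((u * Bgf) ^ 2 + u * Bgf + 1)) * unit_Bgf
  have key2 : u ^ 3 * (Cgf + 8 * (X * dC) + 4 * (X * (X * ddC))) = Cgf * (u + 4 * X) := by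
    linear_combination (8 * X * u ^ 2 + 16 * X ^ 2 * u * Cgf + 8 * X ^ 3 * (u * dC + Cgf * Cgf))
        * deriv_Cgf + 4 * X ^ 2 * u ^ 2 * deriv2_Cgf + 4 * X * Cgf * Cgf_eq
  have key : u ^ 3 * (Bgf * Cgf * (Bgf + 4 * X * Bgf ^ 2)) =
      u ^ 3 * (Cgf + 8 * (X * dC) + 4 * (X * (X * ddC))) := key1.trans key2.symm
  linear_combination Bgf ^ 3 * key -
    ((Bgf * Cgf * (Bgf + 4 * X * Bgf ^ 2)) - (Cgf + 8 * (X * dC) + 4 * (X * (X * ddC)))) *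
      (1 + u * Bgf + (u * Bgf) ^ 2) * unit_Bgf

/-- `[zⁿ](B·C·(B + 4z·(1−4z)⁻¹)) = (2n+1)²·Cₙ`: the total number of vertices over all
complete binary trees with `n` internal vertices carrying a distinguished mutator. -/
theorem stmt18 (n : ℕ) :
    PowerSeries.coeff (R := ℚ) n
        (Bgf * Cgf * (Bgf + 4 * PowerSeries.X * (1 - 4 * PowerSeries.X)⁻¹)) =
      ((2 * n + 1 : ℕ) : ℚ) ^ 2 * (catalan n : ℚ) := by
  rw [inv_eq_Bgf_sq, main_identity]
  rw [map_add, map_add, coeff_C_mul, coeff_C_mul]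
  match n with
  | 0 => simp [Cgf]
  | 1 =>
      rw [coeff_succ_X_mul, coeff_derivative, show (1:ℕ) = 0 + 1 from rfl, coeff_succ_X_mul,
        coeff_zero_X_mul]
      simp [Cgf]
      norm_num
  | (m + 2) =>
      rw [coeff_succ_X_mul, coeff_derivative, coeff_succ_X_mul, coeff_succ_X_mul,
        coeff_derivative, coeff_derivative]
      simp only [Cgf, coeff_mk]
      push_cast
      ring
end
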